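/- Let K ⊆ Γ* be a letter-uniform language over a finite alphabet Γ ⊆ ℤ^d (every word of K uses exactly the letters of Γ), and let u ∈ ℚ₊^d. Then there exists w ∈ K and v ∈ ℚ₊^d with u →_{ℚ₊}^w v if and only if there is a linear order < on Γ such that u is <-admissible and some word of K is <-compatible. Here u is <-admissible if for every γ ∈ Γ and every coordinate i where γ is negative, either u(i) > 0 or some η < γ has η(i) > 0; and w is <-compatible if for each occurrence of a letter γ in w, every coordinate where γ is negative was already incremented by u or by some earlier-occurring letter type. -/

import Mathlib

/-- `FireNN u w v`: the word `w` of integer vectors can be fired from `u` with fractions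
in `(0,1]`, keeping all intermediate counter vectors componentwise nonnegative, ending
at `v` (continuous ℚ₊ firing of a word). -/
inductive FireNN {d : ℕ} : (Fin d → ℚ) → List (Fin d → ℤ) → (Fin d → ℚ) → Prop where
  | nil (u : Fin d → ℚ) (hu : ∀ i, 0 ≤ u i) : FireNN u [] u
  | cons {u v : Fin d → ℚ} {t : Fin d → ℤ} {rest : List (Fin d → ℤ)} {α : ℚ}
      (h0 : 0 < α) (h1 : α ≤ 1) (hu : ∀ i, 0 ≤ u i)
      (hnext : ∀ i, 0 ≤ u i + α * (t i : ℚ))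
      (hrest : FireNN (fun i => u i + α * (t i : ℚ)) rest v) :
      FireNN u (t :: rest) v

/-- `η` occurs strictly before `γ` in the list `L` (which represents a linear order on
the alphabet, listed in increasing order). -/
def Before {d : ℕ} (L : List (Fin d → ℤ)) (η γ : Fin d → ℤ) : Prop :=
  η ∈ L ∧ γ ∈ L ∧ L.idxOf η < L.idxOf γ

/-- `u` is `<`-admissible (for the order given by `L`): for every letter `γ` and every
coordinate `i` where `γ` is negative, either `u i > 0` or some `<`-smaller letter `η`
is positive on `i`. -/
def Admissible {d : ℕ} (L : List (Fin d → ℤ)) (u : Fin d → ℚ) : Prop :=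
  ∀ γ ∈ L, ∀ i, γ i < 0 → 0 < u i ∨ ∃ η, Before L η γ ∧ 0 < η i

/-- `w` is `<`-compatible (for the order `L = [γ₁ < … < γ_k]`): `w` uses only letters
of `L`, every letter of `L` occurs in `w`, and every occurrence of a letter is preceded
by occurrences of all strictly smaller letters; i.e. `w` lies in the regular language
`γ₁γ₁*γ₂(γ₁+γ₂)*γ₃ … γ_k(γ₁+…+γ_k)*`. -/
def Compatible {d : ℕ} (L : List (Fin d → ℤ)) (w : List (Fin d → ℤ)) : Prop :=
  (∀ t ∈ w, t ∈ L) ∧ (∀ γ ∈ L, γ ∈ w) ∧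
    ∀ p : Fin w.length, ∀ η ∈ L, L.idxOf η < L.idxOf (w.get p) →
      ∃ p' : Fin w.length, (p' : ℕ) < (p : ℕ) ∧ w.get p' = η


/-- The index of the first occurrence of `l.get ⟨p, h⟩` is at most `p`. -/
private lemma idxOf_get_le {α : Type*} [DecidableEq α] :
    ∀ (l : List α) (p : ℕ) (h : p < l.length), l.idxOf (l.get ⟨p, h⟩) ≤ p := by
  intro l
  induction l with
  | nil => intro p h; simp at h
  | cons a l ih =>
    intro p h
    cases p with
    | zero => simp
    | succ q =>
      have hq : q < l.length := by simpa using h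
      by_cases hae : a = l.get ⟨q, hq⟩
      · have : (a :: l).get ⟨q + 1, h⟩ = l.get ⟨q, hq⟩ := rfl
        rw [this, ← hae, List.idxOf_cons_self]
        omega
      · have : (a :: l).get ⟨q + 1, h⟩ = l.get ⟨q, hq⟩ := rfl
        rw [this, List.idxOf_cons_ne _ hae]
        exact Nat.succ_le_succ (ih q hq)

/-- In a list sorted by an injective key, index order matches key order. -/
private lemma idxOf_lt_iff_key {α : Type*} [DecidableEq α] {L : List α} {f : α → ℕ}
    (hp : L.Pairwise fun a b => f a ≤ f b)
    (hinj : ∀ a ∈ L, ∀ b ∈ L, f a = f b → a = b)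
    {a b : α} (ha : a ∈ L) (hb : b ∈ L) :
    L.idxOf a < L.idxOf b ↔ f a < f b := by
  have key : ∀ x ∈ L, ∀ y ∈ L, L.idxOf x < L.idxOf y → f x < f y := by
    intro x hx y hy hlt
    have hx' := List.idxOf_lt_length_iff.2 hx
    have hy' := List.idxOf_lt_length_iff.2 hy
    have hle := List.pairwise_iff_get.1 hp ⟨_, hx'⟩ ⟨_, hy'⟩ hlt
    rw [List.idxOf_get, List.idxOf_get] at hle
    refine lt_of_le_of_ne hle fun he => ?_
    have hxy : x = y := hinj x hx y hy he
    subst hxy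
    exact absurd hlt (lt_irrefl _)
  constructor
  · exact key a ha b hb
  · intro hf
    rcases lt_trichotomy (L.idxOf a) (L.idxOf b) with h | h | h
    · exact h
    · exact absurd ((List.idxOf_inj ha).1 h ▸ hf) (lt_irrefl _)
    · exact absurd (key b hb a ha h) (by omega)

private lemma sums_of_fire {d : ℕ} {u v : Fin d → ℚ} {w : List (Fin d → ℤ)}
    (h : FireNN u w v) :
    ∃ α : ℕ → ℚ, (∀ j, 0 < α j) ∧
      ∀ p ≤ w.length, ∀ i,
        0 ≤ u i + ∑ j ∈ Finset.range p, α j * (((w.getD j fun _ => 0) i : ℤ) : ℚ) := by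
  induction h with
  | nil u hu =>
    refine ⟨fun _ => 1, fun _ => one_pos, ?_⟩
    intro p hp i
    have hp0 : p = 0 := Nat.le_zero.mp (by simpa using hp)
    subst hp0
    simpa using hu i
  | @cons u v t rest a h0 h1 hu hnext hrest ih =>
    obtain ⟨α', hα', hsum⟩ := ih
    refine ⟨fun j => Nat.casesOn j a α', fun j => by cases j with
      | zero => exact h0
      | succ k => exact hα' k, ?_⟩
    intro p hp i
    cases p with
    | zero => simpa using hu i
    | succ q =>
      have hq : q ≤ rest.length := by simpa using hp
      have h2 : 0 ≤ (u i + a * ((t i : ℤ) : ℚ)) +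
          ∑ j ∈ Finset.range q, α' j * (((rest.getD j fun _ => 0) i : ℤ) : ℚ) := hsum q hq i
      rw [Finset.sum_range_succ']
      simp only [List.getD_cons_succ, List.getD_cons_zero]
      show 0 ≤ u i + (∑ j ∈ Finset.range q, α' j * (((rest.getD j fun _ => 0) i : ℤ) : ℚ)
        + a * ((t i : ℤ) : ℚ))
      linarith

private lemma fire_of_sums {d : ℕ} :
    ∀ (w : List (Fin d → ℤ)) (u : Fin d → ℚ) (α : ℕ → ℚ),
      (∀ j, 0 < α j) → (∀ j, α j ≤ 1) →
      (∀ p ≤ w.length, ∀ i,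
        0 ≤ u i + ∑ j ∈ Finset.range p, α j * (((w.getD j fun _ => 0) i : ℤ) : ℚ)) →
      ∃ v, FireNN u w v := by
  intro w
  induction w with
  | nil =>
    intro u α h0 h1 hs
    exact ⟨u, FireNN.nil u fun i => by simpa using hs 0 (by simp) i⟩
  | cons t rest ih =>
    intro u α h0 h1 hs
    have hu : ∀ i, 0 ≤ u i := fun i => by simpa using hs 0 (by simp) i
    have hnext : ∀ i, 0 ≤ u i + α 0 * ((t i : ℤ) : ℚ) := by
      intro i
      have := hs 1 (by simp) i
      simpa [Finset.sum_range_one] using this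
    have hs' : ∀ p ≤ rest.length, ∀ i, 0 ≤ (u i + α 0 * ((t i : ℤ) : ℚ)) +
        ∑ j ∈ Finset.range p, α (j + 1) * (((rest.getD j fun _ => 0) i : ℤ) : ℚ) := by
      intro p hp i
      have h2 := hs (p + 1) (by simp; omega) i
      rw [Finset.sum_range_succ'] at h2
      simp only [List.getD_cons_succ, List.getD_cons_zero] at h2
      linarith
    obtain ⟨v, hv⟩ := ih (fun i => u i + α 0 * ((t i : ℤ) : ℚ)) (fun j => α (j + 1))
      (fun j => h0 _) (fun j => h1 _) hs'
    exact ⟨v, FireNN.cons (h0 0) (h1 0) hu hnext hv⟩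

private lemma aux_comb (n M ε x y : ℚ) (hnM : 0 ≤ n * M) (hpowc : x ≤ ε * y)
    (hy : 0 ≤ y) (hk1 : n * (M * ε) ≤ 1) : n * (M * x) ≤ y := by
  nlinarith [mul_le_mul_of_nonneg_left hpowc hnM, mul_le_mul_of_nonneg_right hk1 hy]

set_option maxHeartbeats 1000000 in
/-- For a letter-uniform language `K` over a finite alphabet `Γ ⊆ ℤ^d`
(every word of `K` uses exactly the letters of `Γ`) and `u ∈ ℚ₊^d`: some word of `K`
can be fired from `u` under ℚ₊ semantics iff there is a linear order on `Γ` (given as a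
duplicate-free enumeration `L`) such that `u` is `<`-admissible and some word of `K`
is `<`-compatible. -/
theorem letter_uniform_admissibility {d : ℕ} (Γ : Finset (Fin d → ℤ))
    (K : Set (List (Fin d → ℤ)))
    (hK : ∀ w ∈ K, (∀ t ∈ w, t ∈ Γ) ∧ (∀ γ ∈ Γ, γ ∈ w))
    (u : Fin d → ℚ) (hu : ∀ i, 0 ≤ u i) :
    (∃ w ∈ K, ∃ v, FireNN u w v) ↔
      ∃ L : List (Fin d → ℤ), L.Nodup ∧ L.toFinset = Γ ∧
        Admissible L u ∧ ∃ w ∈ K, Compatible L w := by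
  classical
  constructor
  · rintro ⟨w, hwK, v, hv⟩
    obtain ⟨hwΓ, hΓw⟩ := hK w hwK
    set L : List (Fin d → ℤ) :=
      Γ.toList.mergeSort (fun a b => decide (w.idxOf a ≤ w.idxOf b)) with hLdef
    have hperm : L.Perm Γ.toList := List.mergeSort_perm _ _
    have hnd : L.Nodup := hperm.nodup_iff.2 Γ.nodup_toList
    have htf : L.toFinset = Γ := by
      rw [List.toFinset_eq_of_perm _ _ hperm, Finset.toList_toFinset]
    have hmemL : ∀ γ, γ ∈ L ↔ γ ∈ Γ := by
      intro γ; rw [← htf, List.mem_toFinset]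
    have hmemw : ∀ γ ∈ L, γ ∈ w := fun γ hγ => hΓw γ ((hmemL γ).1 hγ)
    have hsort : L.Pairwise fun a b => w.idxOf a ≤ w.idxOf b := by
      have hs := List.pairwise_mergeSort
        (le := fun a b : Fin d → ℤ => decide (w.idxOf a ≤ w.idxOf b))
        (fun a b c hab hbc => by simp only [decide_eq_true_eq] at *; omega)
        (fun a b => by
          simp only [Bool.or_eq_true, decide_eq_true_eq]
          omega) Γ.toList
      exact hs.imp (fun h => by simpa using h)
    have hinj : ∀ a ∈ L, ∀ b ∈ L, w.idxOf a = w.idxOf b → a = b :=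
      fun a ha b hb he => (List.idxOf_inj (hmemw a ha)).1 he
    have hIdx : ∀ {a b : Fin d → ℤ}, a ∈ L → b ∈ L →
        (L.idxOf a < L.idxOf b ↔ w.idxOf a < w.idxOf b) :=
      fun ha hb => idxOf_lt_iff_key hsort hinj ha hb
    refine ⟨L, hnd, htf, ?_, w, hwK, ?_⟩
    · -- Admissible
      intro γ hγL i hγi
      by_contra hcon
      push_neg at hcon
      obtain ⟨hui, hno⟩ := hcon
      have hγw : γ ∈ w := hmemw γ hγL
      have hp0 : w.idxOf γ < w.length := List.idxOf_lt_length_iff.2 hγw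
      obtain ⟨α, hαpos, hsum⟩ := sums_of_fire hv
      have h1 := hsum (w.idxOf γ + 1) (by omega) i
      rw [Finset.sum_range_succ] at h1
      have hgd : (w.getD (w.idxOf γ) fun _ => 0) = γ := by
        rw [List.getD_eq_getElem _ _ hp0]; exact List.getElem_idxOf hp0
      rw [hgd] at h1
      have hterm : ∀ j ∈ Finset.range (w.idxOf γ),
          α j * (((w.getD j fun _ => 0) i : ℤ) : ℚ) ≤ 0 := by
        intro j hj
        rw [Finset.mem_range] at hj
        have hjlen : j < w.length := lt_trans hj hp0
        have hget : (w.getD j fun _ => 0) = w.get ⟨j, hjlen⟩ := by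
          rw [List.getD_eq_getElem _ _ hjlen]; rfl
        set η := w.get ⟨j, hjlen⟩ with hη
        have hηw : η ∈ w := List.get_mem _ _
        have hηL : η ∈ L := (hmemL η).2 (hwΓ η hηw)
        have hbef : Before L η γ :=
          ⟨hηL, hγL, (hIdx hηL hγL).2 (lt_of_le_of_lt (idxOf_get_le w j hjlen) hj)⟩
        have hneg : η i ≤ 0 := hno η hbef
        rw [hget]
        have hneg' : ((η i : ℤ) : ℚ) ≤ 0 := by exact_mod_cast hneg
        exact mul_nonpos_of_nonneg_of_nonpos (hαpos j).le hneg'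
      have hsum0 :
          (∑ j ∈ Finset.range (w.idxOf γ), α j * (((w.getD j fun _ => 0) i : ℤ) : ℚ)) ≤ 0 :=
        Finset.sum_nonpos hterm
      have hγi' : ((γ i : ℤ) : ℚ) ≤ -1 := by
        have : γ i ≤ -1 := by omega
        exact_mod_cast this
      have hmul : α (w.idxOf γ) * ((γ i : ℤ) : ℚ) ≤ α (w.idxOf γ) * (-1) :=
        mul_le_mul_of_nonneg_left hγi' (hαpos _).le
      linarith [hαpos (w.idxOf γ)]
    · -- Compatible
      refine ⟨fun t ht => (hmemL t).2 (hwΓ t ht), fun γ hγ => hmemw γ hγ, ?_⟩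
      intro p η hηL hlt
      have hgp : w.get p ∈ w := List.get_mem _ _
      have hgpL : w.get p ∈ L := (hmemL _).2 (hwΓ _ hgp)
      have hkey : w.idxOf η < w.idxOf (w.get p) := (hIdx hηL hgpL).1 hlt
      have hle : w.idxOf (w.get p) ≤ (p : ℕ) := idxOf_get_le w p p.isLt
      have hηw : η ∈ w := hmemw η hηL
      have hηlt : w.idxOf η < w.length := List.idxOf_lt_length_iff.2 hηw
      exact ⟨⟨w.idxOf η, hηlt⟩, by simpa using lt_of_lt_of_le hkey hle, List.idxOf_get hηlt⟩
  · rintro ⟨L, hnd, htf, hadm, w, hwK, hwL, hLw, hprec⟩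
    refine ⟨w, hwK, ?_⟩
    set n := w.length with hn
    set t : ℕ → (Fin d → ℤ) := fun j => w.getD j fun _ => 0 with ht
    obtain ⟨M, hM1, hMb⟩ : ∃ M : ℚ, 1 ≤ M ∧ ∀ j, j < n → ∀ i, -M ≤ ((t j i : ℤ) : ℚ) := by
      refine ⟨1 + ∑ j ∈ Finset.range n, ∑ i, ((t j i).natAbs : ℚ), ?_, ?_⟩
      · have h0 : 0 ≤ ∑ j ∈ Finset.range n, ∑ i, ((t j i).natAbs : ℚ) :=
          Finset.sum_nonneg fun j _ => Finset.sum_nonneg fun i _ => Nat.cast_nonneg _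
        linarith
      · intro j hj i
        have h1 : ((t j i).natAbs : ℚ) ≤ ∑ j' ∈ Finset.range n, ∑ i', ((t j' i').natAbs : ℚ) := by
          calc ((t j i).natAbs : ℚ) ≤ ∑ i', ((t j i').natAbs : ℚ) :=
                Finset.single_le_sum (f := fun i' => ((t j i').natAbs : ℚ))
                  (fun _ _ => Nat.cast_nonneg _) (Finset.mem_univ i)
            _ ≤ ∑ j' ∈ Finset.range n, ∑ i', ((t j' i').natAbs : ℚ) :=
                Finset.single_le_sum (f := fun j' => ∑ i', ((t j' i').natAbs : ℚ))
                  (fun _ _ => Finset.sum_nonneg fun _ _ => Nat.cast_nonneg _)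
                  (Finset.mem_range.2 hj)
        have habs : |((t j i : ℤ) : ℚ)| = ((t j i).natAbs : ℚ) := by
          rw [Nat.cast_natAbs, Int.cast_abs]
        have h2 := neg_abs_le ((t j i : ℤ) : ℚ)
        rw [habs] at h2
        linarith
    have hM0 : (0:ℚ) ≤ M := by linarith
    obtain ⟨c, hc0, hc1, hcle⟩ : ∃ c : ℚ, 0 < c ∧ c ≤ 1 ∧ ∀ i, 0 < u i → c ≤ u i := by
      rcases (Finset.univ.filter fun i => 0 < u i).eq_empty_or_nonempty with he | hne
      · refine ⟨1, one_pos, le_refl 1, fun i hi => ?_⟩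
        have hmem : i ∈ Finset.filter (fun i => 0 < u i) Finset.univ :=
          Finset.mem_filter.2 ⟨Finset.mem_univ i, hi⟩
        rw [he] at hmem
        simp at hmem
      · refine ⟨min 1 ((Finset.univ.filter fun i => 0 < u i).inf' hne u), ?_,
          min_le_left _ _, ?_⟩
        · refine lt_min one_pos ?_
          rw [Finset.lt_inf'_iff]
          intro i hi
          exact (Finset.mem_filter.1 hi).2
        · intro i hi
          exact le_trans (min_le_right _ _)
            (Finset.inf'_le _ (Finset.mem_filter.2 ⟨Finset.mem_univ i, hi⟩))
    obtain ⟨ε, hε0, hε1, hkey⟩ : ∃ ε : ℚ, 0 < ε ∧ ε ≤ 1 ∧ (n:ℚ) * (M * ε) ≤ c := by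
      have hDpos : (0:ℚ) < M * ((n:ℚ) + 1) := by
        have h1 : (0:ℚ) < (n:ℚ) + 1 := by positivity
        nlinarith
      refine ⟨c / (M * ((n:ℚ) + 1)), div_pos hc0 hDpos, ?_, ?_⟩
      · rw [div_le_one hDpos]
        nlinarith [mul_nonneg hM0 (Nat.cast_nonneg n : (0:ℚ) ≤ (n:ℚ))]
      · have h2 : (n:ℚ) * (M * (c / (M * ((n:ℚ) + 1)))) = ((n:ℚ) * M * c) / (M * ((n:ℚ) + 1)) := by
          ring
        rw [h2, div_le_iff₀ hDpos]
        nlinarith [mul_nonneg hc0.le hM0]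
    have hmain : ∀ p ≤ n, ∀ i,
        0 ≤ u i + ∑ j ∈ Finset.range p, ε ^ (j + 1) * ((t j i : ℤ) : ℚ) := by
      intro p hp i
      by_cases hall : ∀ j, j < p → 0 ≤ t j i
      · have hnn : 0 ≤ ∑ j ∈ Finset.range p, ε ^ (j + 1) * ((t j i : ℤ) : ℚ) :=
          Finset.sum_nonneg fun j hj => mul_nonneg (pow_nonneg hε0.le _)
            (by exact_mod_cast hall j (Finset.mem_range.1 hj))
        linarith [hu i]
      · push_neg at hall
        by_cases hui : 0 < u i
        · have hterm : ∀ j ∈ Finset.range p, -(ε * M) ≤ ε ^ (j + 1) * ((t j i : ℤ) : ℚ) := by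
            intro j hj
            have hj' : j < n := lt_of_lt_of_le (Finset.mem_range.1 hj) hp
            have hb := hMb j hj' i
            have hpow1 : ε ^ (j + 1) ≤ ε := by
              calc ε ^ (j + 1) ≤ ε ^ 1 := pow_le_pow_of_le_one hε0.le hε1 (by omega)
                _ = ε := pow_one ε
            have hpow0 : (0:ℚ) < ε ^ (j + 1) := pow_pos hε0 _
            rcases le_or_gt 0 ((t j i : ℤ) : ℚ) with hx | hx
            · nlinarith
            · nlinarith
          have hsb := Finset.card_nsmul_le_sum (Finset.range p) _ _ hterm
          rw [Finset.card_range, nsmul_eq_mul] at hsb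
          have hpn : (p:ℚ) ≤ (n:ℚ) := by exact_mod_cast hp
          have hc_le : c ≤ u i := hcle i hui
          have hεM : 0 ≤ ε * M := mul_nonneg hε0.le hM0
          nlinarith [hsb, mul_le_mul_of_nonneg_right hpn hεM]
        · obtain ⟨j0, hj0, hmin⟩ :
              ∃ j0, (j0 < p ∧ t j0 i < 0) ∧ ∀ j < j0, ¬(j < p ∧ t j i < 0) :=
            ⟨Nat.find hall, Nat.find_spec hall, fun j hj => Nat.find_min hall hj⟩
          have hj0n : j0 < n := lt_of_lt_of_le hj0.1 hp
          have hget0 : w.get ⟨j0, hj0n⟩ = t j0 := by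
            rw [ht]; simp only []; rw [List.getD_eq_getElem _ _ hj0n]; rfl
          have hγw : t j0 ∈ w := by rw [← hget0]; exact List.get_mem _ _
          have hγL : t j0 ∈ L := hwL _ hγw
          rcases hadm (t j0) hγL i hj0.2 with hc' | ⟨η, hbef, hηi⟩
          · exact absurd hc' hui
          · obtain ⟨p', hp'lt, hp'eq⟩ :=
              hprec ⟨j0, hj0n⟩ η hbef.1 (by rw [hget0]; exact hbef.2.2)
            have hj'j0 : (p' : ℕ) < j0 := hp'lt
            have htj' : t (p' : ℕ) = η := by
              rw [ht]; simp only []; rw [List.getD_eq_getElem _ _ p'.isLt]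
              exact hp'eq
            have hηpos : (1:ℚ) ≤ ((t (p' : ℕ) i : ℤ) : ℚ) := by
              rw [htj']
              have : (1:ℤ) ≤ η i := hηi
              exact_mod_cast this
            have hsplit : ∑ j ∈ Finset.range p, ε ^ (j + 1) * ((t j i : ℤ) : ℚ)
                = ∑ j ∈ Finset.range j0, ε ^ (j + 1) * ((t j i : ℤ) : ℚ)
                  + ∑ j ∈ Finset.Ico j0 p, ε ^ (j + 1) * ((t j i : ℤ) : ℚ) := by
              simp only [Finset.range_eq_Ico]
              rw [Finset.sum_Ico_consecutive _ (Nat.zero_le j0) hj0.1.le]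
            have hS1 : ε ^ ((p' : ℕ) + 1) ≤
                ∑ j ∈ Finset.range j0, ε ^ (j + 1) * ((t j i : ℤ) : ℚ) := by
              have hnn : ∀ j ∈ Finset.range j0, 0 ≤ ε ^ (j + 1) * ((t j i : ℤ) : ℚ) := by
                intro j hj
                have hjlt : j < j0 := Finset.mem_range.1 hj
                have h0t : 0 ≤ t j i := by
                  by_contra hneg
                  exact hmin j hjlt ⟨lt_trans hjlt hj0.1, by omega⟩
                exact mul_nonneg (pow_nonneg hε0.le _) (by exact_mod_cast h0t)
              calc ε ^ ((p' : ℕ) + 1)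
                  ≤ ε ^ ((p' : ℕ) + 1) * ((t (p' : ℕ) i : ℤ) : ℚ) := by
                    nlinarith [pow_pos hε0 ((p' : ℕ) + 1)]
                _ ≤ ∑ j ∈ Finset.range j0, ε ^ (j + 1) * ((t j i : ℤ) : ℚ) :=
                    Finset.single_le_sum hnn (Finset.mem_range.2 hj'j0)
            have hS2 : -((n:ℚ) * (M * ε ^ (j0 + 1))) ≤
                ∑ j ∈ Finset.Ico j0 p, ε ^ (j + 1) * ((t j i : ℤ) : ℚ) := by
              have hterm : ∀ j ∈ Finset.Ico j0 p,
                  -(M * ε ^ (j0 + 1)) ≤ ε ^ (j + 1) * ((t j i : ℤ) : ℚ) := by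
                intro j hj
                obtain ⟨hj1, hj2⟩ := Finset.mem_Ico.1 hj
                have hjn : j < n := lt_of_lt_of_le hj2 hp
                have hb := hMb j hjn i
                have hpow : ε ^ (j + 1) ≤ ε ^ (j0 + 1) :=
                  pow_le_pow_of_le_one hε0.le hε1 (by omega)
                have hpow0 : (0:ℚ) < ε ^ (j + 1) := pow_pos hε0 _
                have hpow0' : (0:ℚ) < ε ^ (j0 + 1) := pow_pos hε0 _
                rcases le_or_gt 0 ((t j i : ℤ) : ℚ) with hx | hx
                · nlinarith
                · nlinarith
              have hsb := Finset.card_nsmul_le_sum _ _ _ hterm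
              rw [Nat.card_Ico, nsmul_eq_mul] at hsb
              have hcard : ((p - j0 : ℕ) : ℚ) ≤ (n:ℚ) := by
                exact_mod_cast le_trans (Nat.sub_le _ _) hp
              have hMε : (0:ℚ) ≤ M * ε ^ (j0 + 1) :=
                mul_nonneg hM0 (pow_pos hε0 _).le
              nlinarith [hsb, mul_le_mul_of_nonneg_right hcard hMε]
            have hpowc : ε ^ (j0 + 1) ≤ ε * ε ^ ((p' : ℕ) + 1) := by
              calc ε ^ (j0 + 1) ≤ ε ^ ((p' : ℕ) + 2) :=
                    pow_le_pow_of_le_one hε0.le hε1 (by omega)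
                _ = ε * ε ^ ((p' : ℕ) + 1) := by ring
            have hnM : (0:ℚ) ≤ (n:ℚ) * M := mul_nonneg (Nat.cast_nonneg _) hM0
            have hεp : (0:ℚ) ≤ ε ^ ((p' : ℕ) + 1) := (pow_pos hε0 _).le
            have hk1 : (n:ℚ) * (M * ε) ≤ 1 := le_trans hkey hc1
            rw [hsplit]
            have hcomb : (n:ℚ) * (M * ε ^ (j0 + 1)) ≤ ε ^ ((p' : ℕ) + 1) :=
              aux_comb _ _ _ _ _ hnM hpowc hεp hk1
            linarith [hu i, hS1, hS2, hcomb]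
    rw [hn] at hmain
    simp only [ht] at hmain
    obtain ⟨v, hv⟩ := fire_of_sums w u (fun j => ε ^ (j + 1))
      (fun j => pow_pos hε0 _) (fun j => pow_le_one₀ hε0.le hε1) hmain
    exact ⟨v, hv⟩
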